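/- Under the assumptions and conclusions of the bootstrap proposition for the model system (in particular Γ := −Im(G, R_H^+(ω_{N₀})G) > 0, |z(0)| + ‖η(0)‖_{ℓ²} ≤ ε < ε₀, ‖η‖_{Stz∩L²ℓ^{2,−σ}} ≤ Cε and ‖z₁^{N₀−1}z₂^{N₀}‖_{L²} ≤ Cε), there exist ρ₁, ρ₂ ≥ 0 with ρ₁·ρ₂ = 0 such that |z_j(t)| → ρ_j as t → ∞ for j = 1,2; that is, both moduli converge and at least one of the two limits is zero. -/

import Mathlib

noncomputable section
open scoped ENNReal ComplexConjugate
open MeasureTheory Filter Topology Metric Set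

/-- The Hilbert space `ℓ²(ℤ;ℂ)` of square-summable complex sequences indexed by `ℤ`. -/
abbrev Lp2 : Type := lp (fun _ : ℤ => ℂ) 2

namespace DNLS

/-- The discrete Laplacian applied pointwise to a sequence:
`(Δu)(n) = u(n+1) - 2u(n) + u(n-1)`. -/
def lap (u : ℤ → ℂ) (n : ℤ) : ℂ := u (n + 1) - 2 * u n + u (n - 1)

/-- `L` is the bounded operator on `ℓ²` given by the discrete Laplacian `Δ`. -/
def IsDiscreteLaplacian (L : Lp2 →L[ℂ] Lp2) : Prop :=
  ∀ (u : Lp2) (n : ℤ), L u n = lap (⇑u) n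

/-- `T` is the operator of multiplication by the real potential `V`. -/
def IsMulOp (V : ℤ → ℝ) (T : Lp2 →L[ℂ] Lp2) : Prop :=
  ∀ (u : Lp2) (n : ℤ), T u n = V n * u n

/-- `H = -Δ + V` applied pointwise to a sequence. -/
def Hpt (V : ℤ → ℝ) (u : ℤ → ℂ) (n : ℤ) : ℂ := -lap u n + V n * u n

/-- `T` is the discrete Schrödinger operator `H = -Δ + V` on `ℓ²`. -/
def IsSchrodingerOp (V : ℤ → ℝ) (T : Lp2 →L[ℂ] Lp2) : Prop :=
  ∀ (u : Lp2) (n : ℤ), T u n = Hpt V (⇑u) n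

/-- The decay condition `Σ_{n∈ℤ} (1+|n|)|V(n)| < ∞` on the potential. -/
def VCond (V : ℤ → ℝ) : Prop := Summable fun n : ℤ => (1 + |(n : ℝ)|) * |V n|

/-- `ℝ≥0∞`-valued weighted `ℓ²` norm with weight `e^{w n}`:
`(Σ_n e^{w n} ‖f n‖²)^{1/2}`. -/
def wnorm (w : ℤ → ℝ) (f : ℤ → ℂ) : ℝ≥0∞ :=
  (∑' n : ℤ, ENNReal.ofReal (Real.exp (w n) * ‖f n‖ ^ 2)) ^ (1/2 : ℝ)

/-- Weight exponent of the exponentially weighted space `ℓ^a_e`: weight `e^{2a|n|}`. -/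
def expw (a : ℝ) (n : ℤ) : ℝ := 2 * a * |(n : ℝ)|

/-- Weight exponent of the polynomially weighted space `ℓ^{2,σ}`: weight `⟨n⟩^{2σ} = (1+n²)^σ`. -/
def polw (σ : ℝ) (n : ℤ) : ℝ := σ * Real.log (1 + (n : ℝ) ^ 2)

/-- The (complex) pairing `(f,g) = Σ_n f(n) conj(g(n))`. -/
def cpair (f g : ℤ → ℂ) : ℂ := ∑' n : ℤ, f n * conj (g n)

/-- The real inner product `⟨f,g⟩ = Re Σ_n f(n) conj(g(n))`. -/
def rpair (f g : ℤ → ℂ) : ℝ := (cpair f g).re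

/-- The nonlinearity `β(s) = s³ + Σ_{j=4}^M λ_j s^j`. -/
def betaF (M : ℕ) (lam : ℕ → ℝ) (s : ℝ) : ℝ := s ^ 3 + ∑ j ∈ Finset.Icc 4 M, lam j * s ^ j

/-- `B(s) = ∫₀ˢ β(τ) dτ`. -/
def Bfun (M : ℕ) (lam : ℕ → ℝ) (s : ℝ) : ℝ := ∫ τ in (0:ℝ)..s, betaF M lam τ

/-- The conserved energy `E(u) = ½⟨Hu,u⟩ + ½ Σ_n B(|u(n)|²)`. -/
def energy (Hop : Lp2 →L[ℂ] Lp2) (M : ℕ) (lam : ℕ → ℝ) (u : Lp2) : ℝ :=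
  (1/2) * rpair (⇑(Hop u)) ⇑u + (1/2) * ∑' n : ℤ, Bfun M lam (‖u n‖ ^ 2)

/-- `u` is a global solution of the DNLS `i ∂ₜ u = H u + β(|u|²)u`, of class `C¹(ℝ; ℓ²)`. -/
def IsSol (Hop : Lp2 →L[ℂ] Lp2) (M : ℕ) (lam : ℕ → ℝ) (u : ℝ → Lp2) : Prop :=
  ∃ u' : ℝ → Lp2, Continuous u' ∧ ∀ t : ℝ, HasDerivAt u (u' t) t ∧
    ∀ n : ℤ, Complex.I * u' t n = Hop (u t) n + (betaF M lam (‖u t n‖ ^ 2) : ℂ) * u t n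

/-- The rank-two real-orthogonal projection (sequence level) onto the span of
`φ, iφ` with respect to the real inner product. -/
def projSeq (φ : ℤ → ℂ) (f : ℤ → ℂ) (n : ℤ) : ℂ :=
  (rpair f φ : ℝ) * φ n + (rpair f (fun m => Complex.I * φ m) : ℝ) * (Complex.I * φ n)

/-- The projection `P_c` onto the continuous subspace, at the level of sequences. -/
def PcSeq (φ₁ φ₂ : ℤ → ℂ) (f : ℤ → ℂ) (n : ℤ) : ℂ := f n - projSeq φ₁ f n - projSeq φ₂ f n

/-- The projection `P_c u = u - Σ_{j,A} ⟨u, φ_{j,A}⟩ φ_{j,A}` on `ℓ²`. -/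
def PcL (φ₁ φ₂ : Lp2) (u : Lp2) : Lp2 :=
  u - rpair ⇑u ⇑φ₁ • φ₁ - rpair ⇑u (fun n => Complex.I * φ₁ n) • (Complex.I • φ₁)
    - rpair ⇑u ⇑φ₂ • φ₂ - rpair ⇑u (fun n => Complex.I * φ₂ n) • (Complex.I • φ₂)

/-- The symplectic form `Ω(X,Y) = ⟨iX, Y⟩` on `ℓ²`. -/
def Om (X Y : Lp2) : ℝ := rpair (fun n => Complex.I * X n) ⇑Y

end DNLS
namespace DNLS

/-- The normal-form model system \eqref{intro41}–\eqref{intro43} on `[0,∞)`: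
`i ż₁ = e₁z₁ + A₁(|z₁|²,|z₂|²)z₁ + (N₀-1) z̄₁^{N₀-2} z₂^{N₀} (G,η) + 𝓡₁`,
`i ż₂ = e₂z₂ + A₂(|z₁|²,|z₂|²)z₂ + N₀ z₁^{N₀-1} z̄₂^{N₀-1} (Ḡ,η̄) + 𝓡₂`,
`i ∂ₜη = Hη + P_c β(|η|²)η + z̄₁^{N₀-1} z₂^{N₀} G + 𝓡_η`,
with the remainders obeying the stated weighted bounds with constant `cR`. -/
def ModelSystem (V : ℤ → ℝ) (M : ℕ) (lam : ℕ → ℝ) (φ₁ φ₂ : Lp2) (e₁ e₂ : ℝ) (N₀ : ℕ)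
    (a : ℝ) (G : ℤ → ℂ) (A₁ A₂ : ℝ → ℝ → ℝ) (cR : ℝ)
    (z₁ z₂ : ℝ → ℂ) (η : ℝ → Lp2) : Prop :=
  ∃ (z₁' z₂' : ℝ → ℂ) (η' : ℝ → Lp2) (R₁ R₂ : ℝ → ℂ) (Rη : ℝ → ℤ → ℂ),
    (∀ t ∈ Set.Ici (0:ℝ), HasDerivWithinAt z₁ (z₁' t) (Set.Ici 0) t) ∧
    (∀ t ∈ Set.Ici (0:ℝ), HasDerivWithinAt z₂ (z₂' t) (Set.Ici 0) t) ∧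
    (∀ t ∈ Set.Ici (0:ℝ), HasDerivWithinAt η (η' t) (Set.Ici 0) t) ∧
    (∀ t ∈ Set.Ici (0:ℝ),
      Complex.I * z₁' t = (e₁ : ℂ) * z₁ t +
        (A₁ (‖z₁ t‖ ^ 2) (‖z₂ t‖ ^ 2) : ℝ) * z₁ t +
        ((N₀ : ℂ) - 1) * (conj (z₁ t)) ^ (N₀ - 2) * (z₂ t) ^ N₀ * cpair G ⇑(η t) + R₁ t) ∧
    (∀ t ∈ Set.Ici (0:ℝ),
      Complex.I * z₂' t = (e₂ : ℂ) * z₂ t +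
        (A₂ (‖z₁ t‖ ^ 2) (‖z₂ t‖ ^ 2) : ℝ) * z₂ t +
        (N₀ : ℂ) * (z₁ t) ^ (N₀ - 1) * (conj (z₂ t)) ^ (N₀ - 1) *
          conj (cpair G ⇑(η t)) + R₂ t) ∧
    (∀ t ∈ Set.Ici (0:ℝ), ∀ n : ℤ,
      Complex.I * η' t n = Hpt V ⇑(η t) n +
        PcSeq ⇑φ₁ ⇑φ₂ (fun m => (betaF M lam (‖η t m‖ ^ 2) : ℂ) * η t m) n +
        (conj (z₁ t)) ^ (N₀ - 1) * (z₂ t) ^ N₀ * G n + Rη t n) ∧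
    (∀ t ∈ Set.Ici (0:ℝ),
      ENNReal.ofReal ‖R₁ t‖ ≤
        ENNReal.ofReal (cR * (‖z₁ t‖ + ‖z₂ t‖)) *
          (ENNReal.ofReal (‖(z₁ t) ^ (N₀ - 1) * (z₂ t) ^ N₀‖ ^ 2) +
            (wnorm (expw (-a)) ⇑(η t)) ^ (2 : ℕ)) +
        ENNReal.ofReal cR * (wnorm (expw (-a)) ⇑(η t)) ^ (3 : ℕ)) ∧
    (∀ t ∈ Set.Ici (0:ℝ),
      ENNReal.ofReal ‖R₂ t‖ ≤
        ENNReal.ofReal (cR * (‖z₁ t‖ + ‖z₂ t‖)) *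
          (ENNReal.ofReal (‖(z₁ t) ^ (N₀ - 1) * (z₂ t) ^ N₀‖ ^ 2) +
            (wnorm (expw (-a)) ⇑(η t)) ^ (2 : ℕ)) +
        ENNReal.ofReal cR * (wnorm (expw (-a)) ⇑(η t)) ^ (3 : ℕ)) ∧
    (∀ t ∈ Set.Ici (0:ℝ),
      wnorm (expw a) (Rη t) ≤
        ENNReal.ofReal (cR * (‖z₁ t‖ + ‖z₂ t‖) ^ 2) *
          (ENNReal.ofReal ‖(z₁ t) ^ (N₀ - 1) * (z₂ t) ^ N₀‖ +
            wnorm (expw (-a)) ⇑(η t)) +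
        ENNReal.ofReal cR * (wnorm (expw (-a)) ⇑(η t)) ^ (2 : ℕ))

end DNLS
namespace DNLS


/-! ### Auxiliary lemmas for the convergence proof -/

section AuxConv

lemma aux_sqrt_le_linear {x δ : ℝ} (hx : 0 ≤ x) (hδ : 0 < δ) : Real.sqrt x ≤ δ * x + 1/δ := by
  rcases le_or_gt x (1/δ^2) with h | h
  · have h1 : Real.sqrt x ≤ Real.sqrt (1/δ^2) := Real.sqrt_le_sqrt h
    rw [one_div, Real.sqrt_inv, Real.sqrt_sq hδ.le, ← one_div] at h1
    nlinarith [mul_nonneg hδ.le hx]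
  · have h1 : Real.sqrt (1/δ^2) ≤ Real.sqrt x := Real.sqrt_le_sqrt h.le
    rw [one_div, Real.sqrt_inv, Real.sqrt_sq hδ.le] at h1
    have h4 : 1 ≤ δ * Real.sqrt x := by
      have := mul_le_mul_of_nonneg_left h1 hδ.le
      rwa [mul_inv_cancel₀ hδ.ne'] at this
    have h2 := Real.sq_sqrt hx
    have h3 := Real.sqrt_nonneg x
    nlinarith [one_div_pos.2 hδ]

lemma aux_log_le_four_rpow {y : ℝ} (hy : 1 ≤ y) : Real.log y ≤ 4 * y ^ (1/4 : ℝ) := by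
  have hy0 : (0:ℝ) < y := by linarith
  have h1 : Real.log (y ^ (1/4:ℝ)) = (1/4) * Real.log y := Real.log_rpow hy0 _
  have h2 : Real.log (y ^ (1/4:ℝ)) ≤ y ^ (1/4:ℝ) - 1 :=
    Real.log_le_sub_one_of_pos (Real.rpow_pos_of_pos hy0 _)
  nlinarith [Real.rpow_pos_of_pos hy0 (1/4:ℝ)]

lemma aux_log_bound {a σ x : ℝ} (ha : 0 < a) (hσ : 0 < σ) (hx0 : 0 ≤ x) :
    σ * Real.log (1 + x^2) ≤ 4*σ + 8*σ^2/a + 2*a*x := by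
  have key : Real.log (1 + x^2) ≤ 4 + 4 * Real.sqrt x := by
    have h1 : Real.log (1 + x^2) ≤ 4 * (1 + x^2) ^ (1/4:ℝ) :=
      aux_log_le_four_rpow (by nlinarith)
    have h2 : (1 + x^2 : ℝ) ≤ (1+x)^2 := by nlinarith
    have h3 : (1 + x^2 : ℝ) ^ (1/4:ℝ) ≤ ((1+x)^2) ^ (1/4:ℝ) :=
      Real.rpow_le_rpow (by positivity) h2 (by norm_num)
    have h4 : ((1+x:ℝ)^2) ^ (1/4:ℝ) = (1+x) ^ (1/2:ℝ) := by
      rw [← Real.rpow_natCast (1+x) 2, ← Real.rpow_mul (by linarith)]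
      norm_num
    have h5 : (1+x:ℝ) ^ (1/2:ℝ) = Real.sqrt (1+x) := (Real.sqrt_eq_rpow _).symm
    have h6 : Real.sqrt (1+x) ≤ 1 + Real.sqrt x := by
      have hh : (1+x:ℝ) ≤ (1 + Real.sqrt x)^2 := by
        nlinarith [Real.sq_sqrt hx0, Real.sqrt_nonneg x]
      calc Real.sqrt (1+x) ≤ Real.sqrt ((1+Real.sqrt x)^2) := Real.sqrt_le_sqrt hh
        _ = 1 + Real.sqrt x := Real.sqrt_sq (by positivity)
    calc Real.log (1+x^2) ≤ 4 * (1+x^2)^(1/4:ℝ) := h1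
      _ ≤ 4 * Real.sqrt (1+x) := by rw [← h5, ← h4]; linarith
      _ ≤ 4 + 4 * Real.sqrt x := by linarith
  have hs : Real.sqrt x ≤ (a/(2*σ)) * x + (2*σ)/a := by
    have := aux_sqrt_le_linear hx0 (show (0:ℝ) < a/(2*σ) by positivity)
    rwa [one_div_div] at this
  have h7 : σ * Real.log (1+x^2) ≤ σ * (4 + 4*Real.sqrt x) :=
    mul_le_mul_of_nonneg_left key hσ.le
  have h8 : σ * (4*Real.sqrt x) ≤ σ * (4*((a/(2*σ)) * x + (2*σ)/a)) := by
    apply mul_le_mul_of_nonneg_left _ hσ.le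
    linarith
  have heq : σ * (4*((a/(2*σ)) * x + (2*σ)/a)) = 2*a*x + 8*σ^2/a := by
    field_simp; ring
  nlinarith

lemma aux_weight_compare {a σ : ℝ} (ha : 0 < a) (hσ : 0 < σ) (n : ℤ) :
    Real.exp (expw (-a) n) ≤ Real.exp (4*σ + 8*σ^2/a) * Real.exp (polw (-σ) n) := by
  rw [← Real.exp_add]
  apply Real.exp_le_exp.2
  have hxsq : (n:ℝ)^2 = |(n:ℝ)|^2 := (sq_abs _).symm
  have := aux_log_bound ha hσ (abs_nonneg (n:ℝ))
  simp only [expw, polw, hxsq]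
  linarith

lemma wnorm_sq (w : ℤ → ℝ) (f : ℤ → ℂ) :
    (wnorm w f) ^ (2:ℕ) = ∑' n : ℤ, ENNReal.ofReal (Real.exp (w n) * ‖f n‖ ^ 2) := by
  rw [wnorm, ← ENNReal.rpow_natCast _ 2, ← ENNReal.rpow_mul]
  norm_num

lemma wnorm_sq_mono_weight {w₁ w₂ : ℤ → ℝ} {c : ℝ}
    (h : ∀ n, Real.exp (w₁ n) ≤ c * Real.exp (w₂ n)) (f : ℤ → ℂ) :
    (wnorm w₁ f) ^ (2:ℕ) ≤ ENNReal.ofReal c * (wnorm w₂ f) ^ (2:ℕ) := by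
  have hc : 0 ≤ c := by
    by_contra h0
    push_neg at h0
    have := h 0
    nlinarith [Real.exp_pos (w₁ 0), Real.exp_pos (w₂ 0)]
  rw [wnorm_sq, wnorm_sq, ← ENNReal.tsum_mul_left]
  apply ENNReal.tsum_le_tsum
  intro n
  rw [← ENNReal.ofReal_mul hc]
  apply ENNReal.ofReal_le_ofReal
  rw [← mul_assoc]
  exact mul_le_mul_of_nonneg_right (h n) (by positivity)

lemma wnorm_le_wnorm_of_le {w₁ w₂ : ℤ → ℝ} (h : ∀ n, w₁ n ≤ w₂ n) (f : ℤ → ℂ) :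
    wnorm w₁ f ≤ wnorm w₂ f := by
  apply ENNReal.rpow_le_rpow _ (by norm_num)
  apply ENNReal.tsum_le_tsum
  intro n
  exact ENNReal.ofReal_le_ofReal
    (mul_le_mul_of_nonneg_right (Real.exp_le_exp.2 (h n)) (by positivity))

lemma wnorm_le_norm {a : ℝ} (ha : 0 ≤ a) (f : Lp2) :
    wnorm (expw (-a)) ⇑f ≤ ENNReal.ofReal ‖f‖ := by
  have h1 : wnorm (expw (-a)) ⇑f ≤ wnorm (fun _ => 0) ⇑f := by
    apply wnorm_le_wnorm_of_le
    intro n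
    simp only [expw]
    have : 0 ≤ 2 * a * |(n:ℝ)| := by positivity
    linarith
  refine h1.trans ?_
  have hsum : Summable fun n : ℤ => ‖f n‖ ^ 2 := by
    have := lp.memℓp f
    rw [memℓp_gen_iff (by norm_num : 0 < (2:ℝ≥0∞).toReal)] at this
    simpa [ENNReal.toReal_ofNat, Real.rpow_natCast] using this
  have hns : ‖f‖ ^ 2 = ∑' n : ℤ, ‖f n‖ ^ 2 := by
    have := lp.norm_rpow_eq_tsum (p := 2) (by norm_num) f
    simpa [ENNReal.toReal_ofNat, Real.rpow_natCast] using this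
  have h2 : wnorm (fun _ => 0) ⇑f = (ENNReal.ofReal (‖f‖^2)) ^ (1/2:ℝ) := by
    rw [wnorm]
    congr 1
    rw [← ENNReal.ofReal_tsum_of_nonneg (fun n => by positivity) (by simpa using hsum)]
    congr 1
    simp [hns]
  rw [h2, ENNReal.ofReal_pow (norm_nonneg f), ← ENNReal.rpow_natCast (ENNReal.ofReal ‖f‖) 2,
    ← ENNReal.rpow_mul]
  norm_num

lemma aux_wsq_eq (r : ℝ) (x : ℂ) :
    (ENNReal.ofReal (Real.exp r) * (‖x‖₊ : ℝ≥0∞)) ^ (2:ℝ)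
      = ENNReal.ofReal (Real.exp (2*r) * ‖x‖ ^ 2) := by
  have h2 : ∀ y : ℝ≥0∞, y ^ (2:ℝ) = y ^ (2:ℕ) := by
    intro y; rw [← ENNReal.rpow_natCast]; norm_num
  rw [h2, mul_pow, ← ENNReal.ofReal_pow (Real.exp_nonneg _), ← Real.exp_nat_mul,
    ← enorm_eq_nnnorm, ← ofReal_norm, ← ENNReal.ofReal_pow (norm_nonneg _),
    ← ENNReal.ofReal_mul (Real.exp_nonneg _)]
  norm_num

lemma aux_enorm_tsum_bound (b : ℝ) (G f : ℤ → ℂ) :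
    (∑' n : ℤ, (‖G n * conj (f n)‖₊ : ℝ≥0∞)) ≤ wnorm (expw b) G * wnorm (expw (-b)) f := by
  set u : ℤ → ℝ≥0∞ := fun n => ENNReal.ofReal (Real.exp (b * |(n:ℝ)|)) * ‖G n‖₊ with hu_def
  set v : ℤ → ℝ≥0∞ := fun n => ENNReal.ofReal (Real.exp (-b * |(n:ℝ)|)) * ‖f n‖₊ with hv_def
  have huv : ∀ n, (‖G n * conj (f n)‖₊ : ℝ≥0∞) = u n * v n := by
    intro n
    simp only [u, v]
    rw [mul_mul_mul_comm, ← ENNReal.ofReal_mul (Real.exp_nonneg _), ← Real.exp_add]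
    have h0 : b * |(n:ℝ)| + -b * |(n:ℝ)| = 0 := by ring
    rw [h0, Real.exp_zero, ENNReal.ofReal_one, one_mul]
    rw [nnnorm_mul, RCLike.nnnorm_conj, ENNReal.coe_mul]
  have hpq : Real.HolderConjugate 2 2 := Real.HolderConjugate.two_two
  have hu : AEMeasurable u (Measure.count : Measure ℤ) :=
    (measurable_of_countable _).aemeasurable
  have hv : AEMeasurable v (Measure.count : Measure ℤ) :=
    (measurable_of_countable _).aemeasurable
  have hold := ENNReal.lintegral_mul_le_Lp_mul_Lq (Measure.count : Measure ℤ) hpq hu hv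
  rw [lintegral_count] at hold
  have husq : (∫⁻ n, u n ^ (2:ℝ) ∂(Measure.count : Measure ℤ)) ^ (1/2:ℝ) = wnorm (expw b) G := by
    rw [lintegral_count, wnorm]
    congr 1
    refine tsum_congr fun n => ?_
    rw [hu_def, aux_wsq_eq]
    congr 2
    simp only [expw]; ring
  have hvsq : (∫⁻ n, v n ^ (2:ℝ) ∂(Measure.count : Measure ℤ)) ^ (1/2:ℝ)
      = wnorm (expw (-b)) f := by
    rw [lintegral_count, wnorm]
    congr 1
    refine tsum_congr fun n => ?_
    rw [hv_def, aux_wsq_eq]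
    congr 2
    simp only [expw]; ring
  calc (∑' n : ℤ, (‖G n * conj (f n)‖₊ : ℝ≥0∞)) = ∑' n, (u * v) n :=
        tsum_congr fun n => huv n
    _ ≤ _ := hold
    _ = wnorm (expw b) G * wnorm (expw (-b)) f := by rw [husq, hvsq]

lemma cpair_norm_le {b : ℝ} {G f : ℤ → ℂ} (hG : wnorm (expw b) G ≠ ⊤)
    (hf : wnorm (expw (-b)) f ≠ ⊤) :
    ‖cpair G f‖ ≤ (wnorm (expw b) G).toReal * (wnorm (expw (-b)) f).toReal := by
  set S : ℝ≥0∞ := ∑' n : ℤ, (‖G n * conj (f n)‖₊ : ℝ≥0∞) with hS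
  have hSB : S ≤ wnorm (expw b) G * wnorm (expw (-b)) f := aux_enorm_tsum_bound b G f
  have hBfin : wnorm (expw b) G * wnorm (expw (-b)) f ≠ ⊤ := ENNReal.mul_ne_top hG hf
  have hSfin : S ≠ ⊤ := ne_top_of_le_ne_top hBfin hSB
  have hsum : Summable fun n : ℤ => ‖G n * conj (f n)‖ := by
    have := ENNReal.tsum_coe_ne_top_iff_summable.1 hSfin
    exact (NNReal.summable_coe.2 this : _)
  have h1 : ‖cpair G f‖ ≤ ∑' n : ℤ, ‖G n * conj (f n)‖ :=
    norm_tsum_le_tsum_norm hsum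
  have h2 : ENNReal.ofReal (∑' n : ℤ, ‖G n * conj (f n)‖) = S := by
    rw [ENNReal.ofReal_tsum_of_nonneg (fun n => norm_nonneg _) hsum]
    exact tsum_congr fun n => ofReal_norm _
  have h3 : (∑' n : ℤ, ‖G n * conj (f n)‖) = S.toReal := by
    rw [← h2, ENNReal.toReal_ofReal (tsum_nonneg fun n => norm_nonneg _)]
  have h4 : S.toReal ≤ (wnorm (expw b) G * wnorm (expw (-b)) f).toReal :=
    ENNReal.toReal_mono hBfin hSB
  rw [ENNReal.toReal_mul] at h4
  linarith [h3 ▸ h1]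

lemma aux_integrableOn_of_bound {g D : ℝ → ℝ}
    (hg : AEStronglyMeasurable g (volume.restrict (Ioi 0)))
    (hbound : ∀ t ∈ Ioi (0:ℝ), |g t| ≤ D t)
    (hD : (∫⁻ t in Ioi (0:ℝ), ENNReal.ofReal (D t)) ≠ ⊤) : IntegrableOn g (Ioi 0) := by
  refine ⟨hg, ?_⟩
  rw [hasFiniteIntegral_iff_norm]
  calc (∫⁻ t in Ioi (0:ℝ), ENNReal.ofReal ‖g t‖)
      ≤ ∫⁻ t in Ioi (0:ℝ), ENNReal.ofReal (D t) := by
        apply lintegral_mono_ae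
        rw [ae_restrict_iff' measurableSet_Ioi]
        exact ae_of_all _ fun t ht => ENNReal.ofReal_le_ofReal
          ((Real.norm_eq_abs _ ▸ hbound t ht))
    _ < ⊤ := lt_top_iff_ne_top.2 hD

lemma aux_tendsto_of_deriv_integrable {f g : ℝ → ℝ}
    (hderiv : ∀ t ∈ Ici (0:ℝ), HasDerivWithinAt f (g t) (Ici 0) t)
    (hint : IntegrableOn g (Ioi 0)) :
    Tendsto f atTop (𝓝 (f 0 + ∫ t in Ioi 0, g t)) := by
  have key : ∀ b : ℝ, 0 ≤ b → f b = f 0 + ∫ t in (0:ℝ)..b, g t := by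
    intro b hb
    have hcont : ContinuousOn f (Icc 0 b) := fun t ht =>
      ((hderiv t ht.1).continuousWithinAt).mono Icc_subset_Ici_self
    have hd : ∀ x ∈ Ioo (0:ℝ) b, HasDerivWithinAt f (g x) (Ioi x) x := fun x hx =>
      (((hderiv x (le_of_lt hx.1)).hasDerivAt (Ici_mem_nhds hx.1)).hasDerivWithinAt)
    have hii : IntervalIntegrable g volume 0 b := by
      rw [intervalIntegrable_iff_integrableOn_Ioc_of_le hb]
      exact hint.mono_set Ioc_subset_Ioi_self
    have := intervalIntegral.integral_eq_sub_of_hasDeriv_right_of_le hb hcont hd hii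
    linarith [this]
  have h2 : Tendsto (fun b => f 0 + ∫ t in (0:ℝ)..b, g t) atTop
      (𝓝 (f 0 + ∫ t in Ioi 0, g t)) :=
    (intervalIntegral_tendsto_integral_Ioi 0 hint tendsto_id).const_add (f 0)
  apply h2.congr'
  filter_upwards [eventually_ge_atTop (0:ℝ)] with b hb
  exact (key b hb).symm

lemma aux_neg_I_mul_re (w : ℂ) : (-Complex.I * w).re = w.im := by simp

lemma aux_hasDerivWithinAt_norm_sq {z : ℝ → ℂ} {z' : ℂ} {s : Set ℝ} {t : ℝ}
    (hz : HasDerivWithinAt z z' s t) :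
    HasDerivWithinAt (fun u => ‖z u‖ ^ 2) (2 * (z' * conj (z t)).re) s t := by
  have hc : HasDerivWithinAt (fun u => conj (z u)) (conj z') s t :=
    (Complex.conjCLE.toContinuousLinearMap.hasFDerivAt).comp_hasDerivWithinAt t hz
  have hmul : HasDerivWithinAt (fun u => z u * conj (z u))
      (z' * conj (z t) + z t * conj z') s t := hz.mul hc
  have hre := Complex.reCLM.hasFDerivAt.comp_hasDerivWithinAt t hmul
  have hfun : ∀ u : ℝ, (Complex.reCLM ∘ fun u => z u * conj (z u)) u = ‖z u‖ ^ 2 := by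
    intro u
    simp [Function.comp, Complex.mul_conj, Complex.normSq_eq_norm_sq, ← Complex.ofReal_pow]
  have hval : Complex.reCLM (z' * conj (z t) + z t * conj z') = 2 * (z' * conj (z t)).re := by
    simp [Complex.add_re, Complex.mul_re]
    ring
  rw [hval] at hre
  exact hre.congr (fun y _ => (hfun y).symm) ((hfun t).symm)

lemma aux_ofReal_toReal_sq_le (x : ℝ≥0∞) :
    ENNReal.ofReal (x.toReal ^ 2) ≤ x ^ (2:ℕ) := by
  rcases eq_or_ne x ⊤ with h | h
  · simp [h]
  · rw [ENNReal.ofReal_pow ENNReal.toReal_nonneg, ENNReal.ofReal_toReal h]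

end AuxConv

set_option maxHeartbeats 3000000 in
/-- under the hypotheses and conclusions of the bootstrap proposition for
the model system (Fermi Golden Rule `Γ > 0`, small data, a priori bounds, Strichartz and
smoothing bounds, and `‖z₁^{N₀-1}z₂^{N₀}‖_{L²} ≤ Cε`), the moduli `|z₁(t)|, |z₂(t)|`
converge as `t → ∞` to limits `ρ₁, ρ₂ ≥ 0` with `ρ₁ ρ₂ = 0`. -/
theorem model_system_convergence
    (V : ℤ → ℝ) (hV : VCond V) (M : ℕ) (lam : ℕ → ℝ) (φ₁ φ₂ : Lp2)
    (e₁ e₂ : ℝ) (he12 : e₁ < e₂) (he2 : e₂ < 0)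
    (N₀ : ℕ) (hN₀ : 2 ≤ N₀)
    (hres : e₁ + N₀ * (e₂ - e₁) ∈ Set.Ioo (0:ℝ) 4)
    (hresprev : e₁ + ((N₀ : ℝ) - 1) * (e₂ - e₁) < 0)
    (a : ℝ) (ha : 0 < a) (σ : ℝ) (hσ : 7/2 < σ)
    (G RG : ℤ → ℂ) (hGmem : wnorm (expw a) G < ⊤)
    (hRG : ∀ n : ℤ, Hpt V RG n - ((e₁ + N₀ * (e₂ - e₁) : ℝ) : ℂ) * RG n = G n)
    (hFGR : 0 < -(cpair G RG).im)
    (rA : ℝ) (hrA : 0 < rA) (A₁ A₂ : ℝ → ℝ → ℝ)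
    (hA₁ : AnalyticOnNhd ℝ (fun p : ℝ × ℝ => A₁ p.1 p.2) (Metric.ball (0 : ℝ × ℝ) rA))
    (hA₂ : AnalyticOnNhd ℝ (fun p : ℝ × ℝ => A₂ p.1 p.2) (Metric.ball (0 : ℝ × ℝ) rA))
    (cR : ℝ) (hcR : 0 < cR) (K : ℝ) (hK : 0 < K)
    (ε C : ℝ) (hε : 0 < ε) (hC : 0 < C)
    (z₁ z₂ : ℝ → ℂ) (η : ℝ → Lp2)
    (hsys : ModelSystem V M lam φ₁ φ₂ e₁ e₂ N₀ a G A₁ A₂ cR z₁ z₂ η)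
    (hinit : ‖z₁ 0‖ + ‖z₂ 0‖ + ‖η 0‖ ≤ ε)
    (hapriori : ∀ t ∈ Set.Ici (0:ℝ), ‖η t‖ ≤ K * ε ∧ ‖z₁ t‖ + ‖z₂ t‖ ≤ K * ε)
    (hstz : ∀ t ∈ Set.Ici (0:ℝ), ‖η t‖ ≤ C * ε)
    (hsmooth : (∫⁻ t in Set.Ici (0:ℝ), (wnorm (polw (-σ)) ⇑(η t)) ^ (2 : ℕ)) ≤
      ENNReal.ofReal ((C * ε) ^ 2))
    (hL2 : (∫⁻ t in Set.Ici (0:ℝ),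
        ENNReal.ofReal (‖(z₁ t) ^ (N₀ - 1) * (z₂ t) ^ N₀‖ ^ 2)) ≤
      ENNReal.ofReal ((C * ε) ^ 2)) :
    ∃ ρ₁ ρ₂ : ℝ, 0 ≤ ρ₁ ∧ 0 ≤ ρ₂ ∧ ρ₁ * ρ₂ = 0 ∧
      Tendsto (fun t => ‖z₁ t‖) atTop (𝓝 ρ₁) ∧
      Tendsto (fun t => ‖z₂ t‖) atTop (𝓝 ρ₂) := by
  obtain ⟨z₁', z₂', η', R₁, R₂, Rη, hdz₁, hdz₂, hdη, heq₁, heq₂, heqη, hbR₁, hbR₂, hbRη⟩ := hsys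
  clear heqη hbRη hV hFGR hRG hA₁ hA₂ hresprev hres he12 he2 hrA hinit hstz
  have hσ0 : (0:ℝ) < σ := by linarith
  have hKε : (0:ℝ) ≤ K * ε := by positivity
  -- abbreviations
  set Z : ℝ → ℂ := fun t => z₁ t ^ (N₀ - 1) * z₂ t ^ N₀ with hZdef
  have hZapp : ∀ t, z₁ t ^ (N₀ - 1) * z₂ t ^ N₀ = Z t := fun _ => rfl
  set W : ℝ → ℝ≥0∞ := fun t => wnorm (expw (-a)) ⇑(η t) with hWdef
  have hWapp : ∀ t, wnorm (expw (-a)) ⇑(η t) = W t := fun _ => rfl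
  simp only [hZapp, hWapp] at hbR₁ hbR₂ hL2
  set Nr : ℝ → ℝ := fun t => (W t).toReal with hNrdef
  -- basic bounds
  have hWle : ∀ t ∈ Ici (0:ℝ), W t ≤ ENNReal.ofReal (K * ε) := fun t ht =>
    (wnorm_le_norm ha.le (η t)).trans (ENNReal.ofReal_le_ofReal (hapriori t ht).1)
  have hWfin : ∀ t ∈ Ici (0:ℝ), W t ≠ ⊤ := fun t ht =>
    ne_top_of_le_ne_top ENNReal.ofReal_ne_top (hWle t ht)
  have hNrle : ∀ t ∈ Ici (0:ℝ), Nr t ≤ K * ε := by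
    intro t ht
    have := ENNReal.toReal_mono ENNReal.ofReal_ne_top (hWle t ht)
    rwa [ENNReal.toReal_ofReal hKε] at this
  have hNr0 : ∀ t, 0 ≤ Nr t := fun t => ENNReal.toReal_nonneg
  set gA : ℝ := (wnorm (expw a) G).toReal with hgAdef
  have hgA0 : 0 ≤ gA := ENNReal.toReal_nonneg
  have hpair : ∀ t ∈ Ici (0:ℝ), ‖cpair G ⇑(η t)‖ ≤ gA * Nr t := fun t ht =>
    cpair_norm_le hGmem.ne (hWfin t ht)
  have hzsum : ∀ t ∈ Ici (0:ℝ), ‖z₁ t‖ + ‖z₂ t‖ ≤ K * ε := fun t ht => (hapriori t ht).2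
  -- real-valued remainder bounds
  have hRbd : ∀ R : ℝ → ℂ, (∀ t ∈ Ici (0:ℝ),
        ENNReal.ofReal ‖R t‖ ≤ ENNReal.ofReal (cR * (‖z₁ t‖ + ‖z₂ t‖)) *
          (ENNReal.ofReal (‖Z t‖ ^ 2) + W t ^ (2:ℕ)) +
          ENNReal.ofReal cR * W t ^ (3:ℕ)) →
      ∀ t ∈ Ici (0:ℝ), ‖R t‖ ≤ 2 * (cR * (K * ε)) * (‖Z t‖ ^ 2 + Nr t ^ 2) := by
    intro R hR t ht
    have hWt := hWfin t ht
    have h1 := hR t ht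
    rw [← ENNReal.ofReal_toReal hWt] at h1
    rw [← ENNReal.ofReal_pow (hNr0 t), ← ENNReal.ofReal_pow (hNr0 t),
      ← ENNReal.ofReal_add (by positivity) (by positivity),
      ← ENNReal.ofReal_mul (by positivity), ← ENNReal.ofReal_mul hcR.le,
      ← ENNReal.ofReal_add (by positivity) (by positivity)] at h1
    have h2 := (ENNReal.ofReal_le_ofReal_iff (by positivity)).1 h1
    have hx : (0:ℝ) ≤ ‖Z t‖ ^ 2 + Nr t ^ 2 := by positivity
    have e1 : cR * (‖z₁ t‖ + ‖z₂ t‖) * (‖Z t‖ ^ 2 + Nr t ^ 2)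
        ≤ cR * (K * ε) * (‖Z t‖ ^ 2 + Nr t ^ 2) :=
      mul_le_mul_of_nonneg_right (mul_le_mul_of_nonneg_left (hzsum t ht) hcR.le) hx
    have e2 : cR * Nr t ^ 3 ≤ cR * (K * ε) * Nr t ^ 2 := by
      have h := mul_le_mul_of_nonneg_right (hNrle t ht) (sq_nonneg (Nr t))
      calc cR * Nr t ^ 3 = cR * (Nr t * Nr t ^ 2) := by ring
        _ ≤ cR * ((K * ε) * Nr t ^ 2) := mul_le_mul_of_nonneg_left h hcR.le
        _ = cR * (K * ε) * Nr t ^ 2 := by ring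
    have e3 : (0:ℝ) ≤ cR * (K * ε) * ‖Z t‖ ^ 2 := by positivity
    nlinarith [sq_nonneg (‖Z t‖)]
  have hR₁r := hRbd R₁ hbR₁
  have hR₂r := hRbd R₂ hbR₂
  clear hRbd hbR₁ hbR₂
  -- the dominating function
  set c₀ : ℝ := ((N₀:ℝ) + 1) * gA + 4 * cR * (K * ε) ^ 2 with hc₀def
  have hc₀0 : 0 ≤ c₀ := by positivity
  set D : ℝ → ℝ := fun t => c₀ * (‖Z t‖ ^ 2 + Nr t ^ 2) with hDdef
  -- norm of Z as product of norms
  have hZnorm : ∀ t, ‖Z t‖ = ‖z₁ t‖ ^ (N₀ - 1) * ‖z₂ t‖ ^ N₀ := by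
    intro t; rw [← hZapp t, norm_mul, norm_pow, norm_pow]
  -- derivative bound, z₁
  set g₁ : ℝ → ℝ := fun t => 2 * (z₁' t * conj (z₁ t)).re with hg₁def
  set g₂ : ℝ → ℝ := fun t => 2 * (z₂' t * conj (z₂ t)).re with hg₂def
  have hnegI : ∀ w u : ℂ, Complex.I * w = u → w = -Complex.I * u := by
    intro w u h
    calc w = -Complex.I * (Complex.I * w) := by
          rw [← mul_assoc, neg_mul, Complex.I_mul_I, neg_neg, one_mul]
      _ = -Complex.I * u := by rw [h]
  have hg₁bd : ∀ t ∈ Ici (0:ℝ), |g₁ t| ≤ D t := by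
    intro t ht
    have hz' := hnegI _ _ (heq₁ t ht)
    have hre : (z₁' t * conj (z₁ t)).re
        = (((e₁:ℂ) * z₁ t + (A₁ (‖z₁ t‖ ^ 2) (‖z₂ t‖ ^ 2) : ℝ) * z₁ t +
          ((N₀ : ℂ) - 1) * (conj (z₁ t)) ^ (N₀ - 2) * (z₂ t) ^ N₀ * cpair G ⇑(η t) + R₁ t)
            * conj (z₁ t)).im := by
      rw [hz', mul_assoc, aux_neg_I_mul_re]
    set Q : ℂ := ((N₀ : ℂ) - 1) * (conj (z₁ t)) ^ (N₀ - 2) * (z₂ t) ^ N₀ * cpair G ⇑(η t)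
        * conj (z₁ t) + R₁ t * conj (z₁ t) with hQdef
    have him : (z₁' t * conj (z₁ t)).re = Q.im := by
      rw [hre]
      have hmc : z₁ t * conj (z₁ t) = (Complex.normSq (z₁ t) : ℂ) := Complex.mul_conj _
      have hexp : ((e₁:ℂ) * z₁ t + (A₁ (‖z₁ t‖ ^ 2) (‖z₂ t‖ ^ 2) : ℝ) * z₁ t +
          ((N₀ : ℂ) - 1) * (conj (z₁ t)) ^ (N₀ - 2) * (z₂ t) ^ N₀ * cpair G ⇑(η t) + R₁ t)
            * conj (z₁ t)
          = ((e₁ + A₁ (‖z₁ t‖ ^ 2) (‖z₂ t‖ ^ 2) : ℝ) : ℂ) * (Complex.normSq (z₁ t) : ℂ)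
            + Q := by
        rw [hQdef]; push_cast
        linear_combination ((e₁:ℂ) + (A₁ (‖z₁ t‖ ^ 2) (‖z₂ t‖ ^ 2) : ℂ)) * hmc
      rw [hexp, Complex.add_im, ← Complex.ofReal_mul, Complex.ofReal_im, zero_add]
    -- bound |Q.im|
    have habs : |Q.im| ≤ ‖Q‖ := by
      exact Complex.abs_im_le_norm Q
    have hQle : ‖Q‖ ≤ ((N₀:ℝ) + 1) * (‖Z t‖ * ‖cpair G ⇑(η t)‖) + ‖R₁ t‖ * ‖z₁ t‖ := by
      refine (norm_add_le _ _).trans ?_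
      have hn1 : ‖R₁ t * conj (z₁ t)‖ = ‖R₁ t‖ * ‖z₁ t‖ := by
        rw [norm_mul, RCLike.norm_conj]
      have hn2 : ‖((N₀ : ℂ) - 1) * (conj (z₁ t)) ^ (N₀ - 2) * (z₂ t) ^ N₀
            * cpair G ⇑(η t) * conj (z₁ t)‖
          = ‖(N₀ : ℂ) - 1‖ * (‖z₁ t‖ ^ (N₀ - 2) * ‖z₁ t‖ * ‖z₂ t‖ ^ N₀)
            * ‖cpair G ⇑(η t)‖ := by
        rw [norm_mul, norm_mul, norm_mul, norm_mul, norm_pow, norm_pow,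
          RCLike.norm_conj]
        ring
      rw [hn1, hn2]
      have hpow : ‖z₁ t‖ ^ (N₀ - 2) * ‖z₁ t‖ = ‖z₁ t‖ ^ (N₀ - 1) := by
        rw [← pow_succ]; congr 1; omega
      rw [hpow, ← hZnorm t]
      have hN : ‖(N₀ : ℂ) - 1‖ ≤ (N₀:ℝ) + 1 := by
        refine (norm_sub_le _ _).trans ?_
        simp
      have := mul_le_mul_of_nonneg_right
        (mul_le_mul_of_nonneg_right hN (norm_nonneg (Z t))) (norm_nonneg (cpair G ⇑(η t)))
      nlinarith [norm_nonneg (Z t), norm_nonneg (cpair G ⇑(η t))]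
    have f1 := hpair t ht
    have f2 := hR₁r t ht
    have f3 : ‖z₁ t‖ ≤ K * ε := le_trans (le_add_of_nonneg_right (norm_nonneg _)) (hzsum t ht)
    have hA : ‖Z t‖ * ‖cpair G ⇑(η t)‖ ≤ ‖Z t‖ * (gA * Nr t) :=
      mul_le_mul_of_nonneg_left f1 (norm_nonneg _)
    have hB : 2 * (‖Z t‖ * (gA * Nr t)) ≤ gA * (‖Z t‖ ^ 2 + Nr t ^ 2) := by
      nlinarith [sq_nonneg (‖Z t‖ - Nr t), hgA0, norm_nonneg (Z t), hNr0 t]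
    have hC : ‖R₁ t‖ * ‖z₁ t‖ ≤ (2 * (cR * (K * ε)) * (‖Z t‖ ^ 2 + Nr t ^ 2)) * (K * ε) :=
      mul_le_mul f2 f3 (norm_nonneg _) (by positivity)
    have hD2 : ((N₀:ℝ) + 1) * (2 * (‖Z t‖ * ‖cpair G ⇑(η t)‖))
        ≤ ((N₀:ℝ) + 1) * (gA * (‖Z t‖ ^ 2 + Nr t ^ 2)) := by
      apply mul_le_mul_of_nonneg_left _ (by positivity)
      linarith
    have hgabs : |g₁ t| ≤ 2 * |Q.im| := by
      rw [hg₁def]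
      simp only []
      rw [him, abs_mul, abs_two]
    calc |g₁ t| ≤ 2 * |Q.im| := hgabs
      _ ≤ 2 * (((N₀:ℝ) + 1) * (‖Z t‖ * ‖cpair G ⇑(η t)‖) + ‖R₁ t‖ * ‖z₁ t‖) := by
          have := habs.trans hQle; linarith
      _ ≤ D t := by
          have hDt : D t = (((N₀:ℝ) + 1) * gA + 4 * cR * (K * ε) ^ 2)
              * (‖Z t‖ ^ 2 + Nr t ^ 2) := by simp only [hDdef, hc₀def]
          rw [hDt]
          nlinarith [hD2, hC]
  have hg₂bd : ∀ t ∈ Ici (0:ℝ), |g₂ t| ≤ D t := by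
    intro t ht
    have hz' := hnegI _ _ (heq₂ t ht)
    have hre : (z₂' t * conj (z₂ t)).re
        = (((e₂:ℂ) * z₂ t + (A₂ (‖z₁ t‖ ^ 2) (‖z₂ t‖ ^ 2) : ℝ) * z₂ t +
          (N₀ : ℂ) * (z₁ t) ^ (N₀ - 1) * (conj (z₂ t)) ^ (N₀ - 1) * conj (cpair G ⇑(η t))
            + R₂ t) * conj (z₂ t)).im := by
      rw [hz', mul_assoc, aux_neg_I_mul_re]
    set Q : ℂ := (N₀ : ℂ) * (z₁ t) ^ (N₀ - 1) * (conj (z₂ t)) ^ (N₀ - 1)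
        * conj (cpair G ⇑(η t)) * conj (z₂ t) + R₂ t * conj (z₂ t) with hQdef
    have him : (z₂' t * conj (z₂ t)).re = Q.im := by
      rw [hre]
      have hmc : z₂ t * conj (z₂ t) = (Complex.normSq (z₂ t) : ℂ) := Complex.mul_conj _
      have hexp : ((e₂:ℂ) * z₂ t + (A₂ (‖z₁ t‖ ^ 2) (‖z₂ t‖ ^ 2) : ℝ) * z₂ t +
          (N₀ : ℂ) * (z₁ t) ^ (N₀ - 1) * (conj (z₂ t)) ^ (N₀ - 1) * conj (cpair G ⇑(η t))
            + R₂ t) * conj (z₂ t)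
          = ((e₂ + A₂ (‖z₁ t‖ ^ 2) (‖z₂ t‖ ^ 2) : ℝ) : ℂ) * (Complex.normSq (z₂ t) : ℂ)
            + Q := by
        rw [hQdef]; push_cast
        linear_combination ((e₂:ℂ) + (A₂ (‖z₁ t‖ ^ 2) (‖z₂ t‖ ^ 2) : ℂ)) * hmc
      rw [hexp, Complex.add_im, ← Complex.ofReal_mul, Complex.ofReal_im, zero_add]
    have habs : |Q.im| ≤ ‖Q‖ := by
      exact Complex.abs_im_le_norm Q
    have hQle : ‖Q‖ ≤ ((N₀:ℝ) + 1) * (‖Z t‖ * ‖cpair G ⇑(η t)‖) + ‖R₂ t‖ * ‖z₂ t‖ := by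
      refine (norm_add_le _ _).trans ?_
      have hn1 : ‖R₂ t * conj (z₂ t)‖ = ‖R₂ t‖ * ‖z₂ t‖ := by
        rw [norm_mul, RCLike.norm_conj]
      have hn2 : ‖(N₀ : ℂ) * (z₁ t) ^ (N₀ - 1) * (conj (z₂ t)) ^ (N₀ - 1)
            * conj (cpair G ⇑(η t)) * conj (z₂ t)‖
          = ‖(N₀ : ℂ)‖ * (‖z₁ t‖ ^ (N₀ - 1) * (‖z₂ t‖ ^ (N₀ - 1) * ‖z₂ t‖))
            * ‖cpair G ⇑(η t)‖ := by
        rw [norm_mul, norm_mul, norm_mul, norm_mul, norm_pow, norm_pow,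
          RCLike.norm_conj, RCLike.norm_conj]
        ring
      rw [hn1, hn2]
      have hpow : ‖z₂ t‖ ^ (N₀ - 1) * ‖z₂ t‖ = ‖z₂ t‖ ^ N₀ := by
        rw [← pow_succ]; congr 1; omega
      rw [hpow, ← hZnorm t]
      have hN : ‖(N₀ : ℂ)‖ ≤ (N₀:ℝ) + 1 := by simp
      have := mul_le_mul_of_nonneg_right
        (mul_le_mul_of_nonneg_right hN (norm_nonneg (Z t))) (norm_nonneg (cpair G ⇑(η t)))
      nlinarith [norm_nonneg (Z t), norm_nonneg (cpair G ⇑(η t))]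
    have f1 := hpair t ht
    have f2 := hR₂r t ht
    have f3 : ‖z₂ t‖ ≤ K * ε := le_trans (le_add_of_nonneg_left (norm_nonneg _)) (hzsum t ht)
    have hA : ‖Z t‖ * ‖cpair G ⇑(η t)‖ ≤ ‖Z t‖ * (gA * Nr t) :=
      mul_le_mul_of_nonneg_left f1 (norm_nonneg _)
    have hB : 2 * (‖Z t‖ * (gA * Nr t)) ≤ gA * (‖Z t‖ ^ 2 + Nr t ^ 2) := by
      nlinarith [sq_nonneg (‖Z t‖ - Nr t), hgA0, norm_nonneg (Z t), hNr0 t]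
    have hC : ‖R₂ t‖ * ‖z₂ t‖ ≤ (2 * (cR * (K * ε)) * (‖Z t‖ ^ 2 + Nr t ^ 2)) * (K * ε) :=
      mul_le_mul f2 f3 (norm_nonneg _) (by positivity)
    have hD2 : ((N₀:ℝ) + 1) * (2 * (‖Z t‖ * ‖cpair G ⇑(η t)‖))
        ≤ ((N₀:ℝ) + 1) * (gA * (‖Z t‖ ^ 2 + Nr t ^ 2)) := by
      apply mul_le_mul_of_nonneg_left _ (by positivity)
      linarith
    have hgabs : |g₂ t| ≤ 2 * |Q.im| := by
      rw [hg₂def]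
      simp only []
      rw [him, abs_mul, abs_two]
    calc |g₂ t| ≤ 2 * |Q.im| := hgabs
      _ ≤ 2 * (((N₀:ℝ) + 1) * (‖Z t‖ * ‖cpair G ⇑(η t)‖) + ‖R₂ t‖ * ‖z₂ t‖) := by
          have := habs.trans hQle; linarith
      _ ≤ D t := by
          have hDt : D t = (((N₀:ℝ) + 1) * gA + 4 * cR * (K * ε) ^ 2)
              * (‖Z t‖ ^ 2 + Nr t ^ 2) := by simp only [hDdef, hc₀def]
          rw [hDt]
          nlinarith [hD2, hC]
  -- continuity on (0,∞)
  have hz₁c : ContinuousOn z₁ (Ioi (0:ℝ)) := fun t ht =>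
    (((hdz₁ t (mem_Ici.2 (le_of_lt (mem_Ioi.1 ht)))).hasDerivAt (Ici_mem_nhds ht)).continuousAt).continuousWithinAt
  have hz₂c : ContinuousOn z₂ (Ioi (0:ℝ)) := fun t ht =>
    (((hdz₂ t (mem_Ici.2 (le_of_lt (mem_Ioi.1 ht)))).hasDerivAt (Ici_mem_nhds ht)).continuousAt).continuousWithinAt
  have hZc : ContinuousOn Z (Ioi (0:ℝ)) := (hz₁c.pow _).mul (hz₂c.pow _)
  -- integrability of the dominating function
  have hDint : (∫⁻ t in Ioi (0:ℝ), ENNReal.ofReal (D t)) ≠ ⊤ := by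
    have hptw : ∀ t : ℝ, ENNReal.ofReal (D t)
        ≤ ENNReal.ofReal c₀ * (ENNReal.ofReal (‖Z t‖ ^ 2) + W t ^ (2:ℕ)) := by
      intro t
      have hDt : D t = c₀ * (‖Z t‖ ^ 2 + Nr t ^ 2) := by simp only [hDdef]
      rw [hDt, ENNReal.ofReal_mul hc₀0,
        ENNReal.ofReal_add (sq_nonneg (‖Z t‖)) (sq_nonneg (Nr t))]
      exact mul_le_mul_right (add_le_add_right (aux_ofReal_toReal_sq_le (W t)) _) _
    have hZmeas : AEMeasurable (fun t => ENNReal.ofReal (‖Z t‖ ^ 2))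
        (volume.restrict (Ioi (0:ℝ))) := by
      apply ENNReal.measurable_ofReal.comp_aemeasurable
      exact (((hZc.norm).pow 2).aemeasurable measurableSet_Ioi)
    have hZL2 : (∫⁻ t in Ioi (0:ℝ), ENNReal.ofReal (‖Z t‖ ^ 2))
        ≤ ENNReal.ofReal ((C * ε) ^ 2) :=
      le_trans (lintegral_mono_set Ioi_subset_Ici_self) hL2
    set cw : ℝ := Real.exp (4*σ + 8*σ^2/a) with hcwdef
    have hWsm : (∫⁻ t in Ioi (0:ℝ), W t ^ (2:ℕ))
        ≤ ENNReal.ofReal cw * ENNReal.ofReal ((C * ε) ^ 2) := by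
      calc (∫⁻ t in Ioi (0:ℝ), W t ^ (2:ℕ))
          ≤ ∫⁻ t in Ioi (0:ℝ), ENNReal.ofReal cw * (wnorm (polw (-σ)) ⇑(η t)) ^ (2:ℕ) := by
            apply lintegral_mono
            intro t
            exact wnorm_sq_mono_weight (fun n => aux_weight_compare ha hσ0 n) _
        _ = ENNReal.ofReal cw * ∫⁻ t in Ioi (0:ℝ), (wnorm (polw (-σ)) ⇑(η t)) ^ (2:ℕ) :=
            lintegral_const_mul' _ _ ENNReal.ofReal_ne_top
        _ ≤ ENNReal.ofReal cw * ENNReal.ofReal ((C * ε) ^ 2) := by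
            apply mul_le_mul_right
            exact le_trans (lintegral_mono_set Ioi_subset_Ici_self) hsmooth
    have hchain : (∫⁻ t in Ioi (0:ℝ), ENNReal.ofReal (D t))
        ≤ ENNReal.ofReal c₀ * ((∫⁻ t in Ioi (0:ℝ), ENNReal.ofReal (‖Z t‖ ^ 2))
            + ∫⁻ t in Ioi (0:ℝ), W t ^ (2:ℕ)) := by
      calc (∫⁻ t in Ioi (0:ℝ), ENNReal.ofReal (D t))
          ≤ ∫⁻ t in Ioi (0:ℝ),
              ENNReal.ofReal c₀ * (ENNReal.ofReal (‖Z t‖ ^ 2) + W t ^ (2:ℕ)) :=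
            lintegral_mono hptw
        _ = ENNReal.ofReal c₀ * ∫⁻ t in Ioi (0:ℝ),
              (ENNReal.ofReal (‖Z t‖ ^ 2) + W t ^ (2:ℕ)) :=
            lintegral_const_mul' _ _ ENNReal.ofReal_ne_top
        _ = ENNReal.ofReal c₀ * ((∫⁻ t in Ioi (0:ℝ), ENNReal.ofReal (‖Z t‖ ^ 2))
              + ∫⁻ t in Ioi (0:ℝ), W t ^ (2:ℕ)) := by
            rw [lintegral_add_left' hZmeas]
    refine ne_top_of_le_ne_top ?_ hchain
    apply ENNReal.mul_ne_top ENNReal.ofReal_ne_top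
    apply ENNReal.add_ne_top.2
    constructor
    · exact ne_top_of_le_ne_top ENNReal.ofReal_ne_top hZL2
    · exact ne_top_of_le_ne_top
        (ENNReal.mul_ne_top ENNReal.ofReal_ne_top ENNReal.ofReal_ne_top) hWsm
  -- measurability of the derivatives g₁, g₂
  have hmeas : ∀ (z : ℝ → ℂ) (z' : ℝ → ℂ),
      (∀ t ∈ Ici (0:ℝ), HasDerivWithinAt z (z' t) (Ici 0) t) →
      AEStronglyMeasurable (fun t => 2 * (z' t * conj (z t)).re)
        (volume.restrict (Ioi (0:ℝ))) := by
    intro z z' hd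
    have hzc : ContinuousOn z (Ioi (0:ℝ)) := fun t ht =>
      (((hd t (mem_Ici.2 (le_of_lt (mem_Ioi.1 ht)))).hasDerivAt (Ici_mem_nhds ht)).continuousAt).continuousWithinAt
    have heqd : ∀ t ∈ Ioi (0:ℝ), deriv z t = z' t := fun t ht =>
      ((hd t (mem_Ici.2 (le_of_lt (mem_Ioi.1 ht)))).hasDerivAt (Ici_mem_nhds ht)).deriv
    have hm : AEMeasurable (fun t => 2 * (deriv z t * conj (z t)).re)
        (volume.restrict (Ioi (0:ℝ))) := by
      apply AEMeasurable.const_mul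
      apply Complex.measurable_re.comp_aemeasurable
      exact ((measurable_deriv z).aemeasurable).mul
        ((Complex.conjCLE.continuous.comp_continuousOn hzc).aemeasurable measurableSet_Ioi)
    have heqae : (fun t => 2 * (deriv z t * conj (z t)).re)
        =ᵐ[volume.restrict (Ioi (0:ℝ))] (fun t => 2 * (z' t * conj (z t)).re) := by
      rw [Filter.eventuallyEq_iff_exists_mem]
      refine ⟨Ioi 0, ?_, fun t ht => by simp only [heqd t ht]⟩
      exact self_mem_ae_restrict measurableSet_Ioi
    exact (hm.congr heqae).aestronglyMeasurable
  have hint₁ : IntegrableOn g₁ (Ioi (0:ℝ)) :=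
    aux_integrableOn_of_bound (hmeas z₁ z₁' hdz₁)
      (fun t ht => hg₁bd t (mem_Ici.2 (le_of_lt (mem_Ioi.1 ht)))) hDint
  have hint₂ : IntegrableOn g₂ (Ioi (0:ℝ)) :=
    aux_integrableOn_of_bound (hmeas z₂ z₂' hdz₂)
      (fun t ht => hg₂bd t (mem_Ici.2 (le_of_lt (mem_Ioi.1 ht)))) hDint
  -- convergence of the squared moduli
  have hq₁ : ∀ t ∈ Ici (0:ℝ), HasDerivWithinAt (fun u => ‖z₁ u‖ ^ 2) (g₁ t) (Ici 0) t :=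
    fun t ht => aux_hasDerivWithinAt_norm_sq (hdz₁ t ht)
  have hq₂ : ∀ t ∈ Ici (0:ℝ), HasDerivWithinAt (fun u => ‖z₂ u‖ ^ 2) (g₂ t) (Ici 0) t :=
    fun t ht => aux_hasDerivWithinAt_norm_sq (hdz₂ t ht)
  have htsq₁ := aux_tendsto_of_deriv_integrable hq₁ hint₁
  have htsq₂ := aux_tendsto_of_deriv_integrable hq₂ hint₂
  set L₁ : ℝ := ‖z₁ 0‖ ^ 2 + ∫ t in Ioi (0:ℝ), g₁ t with hL₁def
  set L₂ : ℝ := ‖z₂ 0‖ ^ 2 + ∫ t in Ioi (0:ℝ), g₂ t with hL₂def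
  have h1 : Tendsto (fun t => ‖z₁ t‖) atTop (nhds (Real.sqrt L₁)) := by
    have := (Real.continuous_sqrt.tendsto L₁).comp htsq₁
    refine this.congr fun t => ?_
    simp [Function.comp, Real.sqrt_sq (norm_nonneg (z₁ t))]
  have h2 : Tendsto (fun t => ‖z₂ t‖) atTop (nhds (Real.sqrt L₂)) := by
    have := (Real.continuous_sqrt.tendsto L₂).comp htsq₂
    refine this.congr fun t => ?_
    simp [Function.comp, Real.sqrt_sq (norm_nonneg (z₂ t))]
  -- the product of the limits vanishes
  have hprod : Real.sqrt L₁ * Real.sqrt L₂ = 0 := by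
    by_contra hne
    obtain ⟨hne₁, hne₂⟩ := mul_ne_zero_iff.1 hne
    have hρ₁ : 0 < Real.sqrt L₁ := (Real.sqrt_nonneg _).lt_of_ne' hne₁
    have hρ₂ : 0 < Real.sqrt L₂ := (Real.sqrt_nonneg _).lt_of_ne' hne₂
    set m : ℝ := Real.sqrt L₁ ^ (N₀ - 1) * Real.sqrt L₂ ^ N₀ with hmdef
    have hm : 0 < m := by positivity
    have hZt : Tendsto (fun t => ‖Z t‖) atTop (nhds m) := by
      have := (h1.pow (N₀ - 1)).mul (h2.pow N₀)
      refine this.congr fun t => ?_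
      rw [hZnorm t]
    have hev : ∀ᶠ t in atTop, m / 2 < ‖Z t‖ := hZt.eventually (lt_mem_nhds (half_lt_self hm))
    obtain ⟨T, hT⟩ := eventually_atTop.1 hev
    have hsub : Ici (max T 0) ⊆ Ici (0:ℝ) := Ici_subset_Ici.2 (le_max_right T 0)
    have hle : ENNReal.ofReal ((m/2) ^ 2) * volume (Ici (max T 0))
        ≤ ∫⁻ t in Ici (0:ℝ), ENNReal.ofReal (‖Z t‖ ^ 2) := by
      calc ENNReal.ofReal ((m/2) ^ 2) * volume (Ici (max T 0))
          = ∫⁻ _ in Ici (max T 0), ENNReal.ofReal ((m/2) ^ 2) := by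
            rw [setLIntegral_const]
        _ ≤ ∫⁻ t in Ici (max T 0), ENNReal.ofReal (‖Z t‖ ^ 2) := by
            apply lintegral_mono_ae
            rw [ae_restrict_iff' measurableSet_Ici]
            refine ae_of_all _ fun t ht => ENNReal.ofReal_le_ofReal ?_
            have := hT t (le_trans (le_max_left T 0) ht)
            have hm2 : (0:ℝ) ≤ m/2 := by positivity
            nlinarith [norm_nonneg (Z t)]
        _ ≤ ∫⁻ t in Ici (0:ℝ), ENNReal.ofReal (‖Z t‖ ^ 2) := lintegral_mono_set hsub
    rw [Real.volume_Ici, ENNReal.mul_top (by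
      simp only [ne_eq, ENNReal.ofReal_eq_zero, not_le]
      positivity)] at hle
    have := top_le_iff.1 (hle.trans hL2)
    exact ENNReal.ofReal_ne_top this
  exact ⟨Real.sqrt L₁, Real.sqrt L₂, Real.sqrt_nonneg _, Real.sqrt_nonneg _, hprod, h1, h2⟩


end DNLS
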